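/- Let σ > 0 and n ≥ 1 a natural number. Then the tail sum satisfies (2/(√(2π)σ))·∑_{k=n}^{∞} exp(-(2kπ)²/(2σ²)) ≤ (1 - erf(π√2(n-1)/σ))/(2π). -/

import Mathlib

open Set MeasureTheory Real

noncomputable def erf (x : ℝ) : ℝ :=
  (2 / Real.sqrt Real.pi) * ∫ t in (0:ℝ)..x, Real.exp (-t^2)

theorem aux_iUnion_Ioc (a : ℝ) : (⋃ k : ℕ, Ioc (a + k) (a + k + 1)) = Ioi a := by
  ext x
  simp only [mem_iUnion, mem_Ioc, mem_Ioi]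
  constructor
  · rintro ⟨k, h1, _⟩
    exact lt_of_le_of_lt (le_add_of_nonneg_right (Nat.cast_nonneg k)) h1
  · intro hx
    have h0 : 0 < x - a := by linarith
    have hm1 : 1 ≤ ⌈x - a⌉₊ := Nat.one_le_ceil_iff.2 h0
    refine ⟨⌈x - a⌉₊ - 1, ?_, ?_⟩
    · have : (⌈x - a⌉₊ - 1 : ℕ) < ⌈x - a⌉₊ := Nat.sub_lt hm1 one_pos
      have := Nat.lt_ceil.1 this
      linarith
    · have h2 : x - a ≤ ⌈x - a⌉₊ := Nat.le_ceil _
      have h3 : ((⌈x - a⌉₊ - 1 : ℕ) : ℝ) = (⌈x - a⌉₊ : ℝ) - 1 := by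
        push_cast [hm1]; ring
      rw [h3]; linarith

theorem integral_Ioi_eval (s a : ℝ) (hs : 0 < s) (ha : 0 ≤ a) :
    ∫ x in Ioi a, Real.exp (-(s*x)^2) = (Real.sqrt Real.pi / (2*s)) * (1 - erf (s*a)) := by
  have hrw : ∀ x : ℝ, Real.exp (-(s*x)^2) = Real.exp (-(s^2) * x^2) := by
    intro x; ring_nf
  have hint : Integrable (fun x : ℝ => Real.exp (-(s^2) * x^2)) :=
    integrable_exp_neg_mul_sq (by positivity)
  have hsplit : (∫ x in Ioc 0 a, Real.exp (-(s^2)*x^2)) + ∫ x in Ioi a, Real.exp (-(s^2)*x^2)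
      = ∫ x in Ioi (0:ℝ), Real.exp (-(s^2)*x^2) := by
    rw [← Set.Ioc_union_Ioi_eq_Ioi ha, setIntegral_union (Set.Ioc_disjoint_Ioi le_rfl)
      measurableSet_Ioi hint.integrableOn hint.integrableOn]
  have hIoi0 : ∫ x in Ioi (0:ℝ), Real.exp (-(s^2)*x^2) = Real.sqrt Real.pi / (2*s) := by
    rw [integral_gaussian_Ioi]
    rw [Real.sqrt_div Real.pi_pos.le, Real.sqrt_sq hs.le]
    ring
  have hIoc : ∫ x in Ioc 0 a, Real.exp (-(s^2)*x^2)
      = (Real.sqrt Real.pi / (2*s)) * erf (s*a) := by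
    rw [← intervalIntegral.integral_of_le ha]
    have : ∀ x : ℝ, Real.exp (-(s^2)*x^2) = (fun t => Real.exp (-t^2)) (s * x) := by
      intro x; simp; ring_nf
    simp_rw [this]
    rw [intervalIntegral.integral_comp_mul_left (fun t => Real.exp (-t^2)) hs.ne']
    rw [erf]
    have hπ : 0 < Real.sqrt Real.pi := Real.sqrt_pos.2 Real.pi_pos
    field_simp
    ring_nf; rw [mul_comm s, mul_assoc, mul_inv_cancel₀ hs.ne', mul_one]
  simp_rw [hrw]
  rw [← hsplit] at hIoi0
  rw [hIoc] at hIoi0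
  linarith

theorem gaussian_tail_sum_bound (σ : ℝ) (n : ℕ) (hσ : 0 < σ) (hn : 1 ≤ n) :
    (2 / (Real.sqrt (2 * Real.pi) * σ)) *
        ∑' k : ℕ, Real.exp (-(2 * ((n:ℝ) + k) * Real.pi)^2 / (2 * σ^2)) ≤
      (1 - erf (Real.pi * Real.sqrt 2 * ((n:ℝ) - 1) / σ)) / (2 * Real.pi) := by
  set s : ℝ := Real.pi * Real.sqrt 2 / σ with hs_def
  have h2 : (0:ℝ) < Real.sqrt 2 := Real.sqrt_pos.2 two_pos
  have hs : 0 < s := by positivity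
  set a : ℝ := (n:ℝ) - 1 with ha_def
  have ha : 0 ≤ a := by
    have : (1:ℝ) ≤ n := by exact_mod_cast hn
    simp [ha_def]; linarith
  have hσ' : σ ≠ 0 := hσ.ne'
  have hsq2 : Real.sqrt 2 * Real.sqrt 2 = 2 := Real.mul_self_sqrt two_pos.le
  -- rewrite the terms
  have hterm_eq : ∀ k : ℕ, Real.exp (-(2 * ((n:ℝ) + k) * Real.pi)^2 / (2 * σ^2))
      = Real.exp (-(s * ((n:ℝ) + k))^2) := by
    intro k
    congr 1
    rw [hs_def]
    field_simp
    ring_nf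
    rw [Real.sq_sqrt two_pos.le]
  have hint : Integrable (fun x : ℝ => Real.exp (-(s*x)^2)) := by
    have : ∀ x : ℝ, Real.exp (-(s*x)^2) = Real.exp (-(s^2) * x^2) := by intro x; ring_nf
    simp_rw [this]
    exact integrable_exp_neg_mul_sq (by positivity)
  -- per-term bound
  have hterm : ∀ k : ℕ, Real.exp (-(s * ((n:ℝ) + k))^2)
      ≤ ∫ x in Ioc (a + k) (a + k + 1), Real.exp (-(s*x)^2) := by
    intro k
    have hmeas : volume (Ioc (a + (k:ℝ)) (a + k + 1)) = 1 := by
      rw [Real.volume_Ioc]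
      norm_num
    have := setIntegral_ge_of_const_le (μ := volume) (c := Real.exp (-(s * ((n:ℝ) + k))^2))
      (f := fun x => Real.exp (-(s*x)^2)) measurableSet_Ioc
      (by rw [hmeas]; exact ENNReal.one_ne_top)
      (fun x hx => by
        apply Real.exp_le_exp.2
        apply neg_le_neg
        have hx1 : a + k < x := hx.1
        have hx2 : x ≤ a + k + 1 := hx.2
        have hxnn : 0 ≤ x := le_of_lt (lt_of_le_of_lt (by positivity) hx1)
        have hle : x ≤ (n:ℝ) + k := by rw [ha_def] at hx2; linarith
        have : s * x ≤ s * ((n:ℝ) + k) := by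
          apply mul_le_mul_of_nonneg_left hle hs.le
        exact pow_le_pow_left₀ (by positivity) this 2)
      hint.integrableOn
    rw [measureReal_def, hmeas] at this
    simpa using this
  -- sum of integrals = integral over Ioi a
  have hUnion := aux_iUnion_Ioc a
  have hSum : HasSum (fun k : ℕ => ∫ x in Ioc (a + k) (a + k + 1), Real.exp (-(s*x)^2))
      (∫ x in Ioi a, Real.exp (-(s*x)^2)) := by
    rw [← hUnion]
    apply hasSum_integral_iUnion (fun k => measurableSet_Ioc)
    · intro i j hij
      simp only [Function.onFun]
      rw [Set.Ioc_disjoint_Ioc]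
      rcases hij.lt_or_gt with h | h
      · have : (i:ℝ) + 1 ≤ j := by exact_mod_cast h
        exact le_trans (min_le_left _ _) (le_trans (by linarith) (le_max_right _ _))
      · have : (j:ℝ) + 1 ≤ i := by exact_mod_cast h
        exact le_trans (min_le_right _ _) (le_trans (by linarith) (le_max_left _ _))
    · rw [hUnion]; exact hint.integrableOn
  -- bound the tsum
  have hsummable : Summable (fun k : ℕ => Real.exp (-(s * ((n:ℝ) + k))^2)) :=
    Summable.of_nonneg_of_le (fun k => (Real.exp_pos _).le) hterm hSum.summable
  have htsum_le : (∑' k : ℕ, Real.exp (-(s * ((n:ℝ) + k))^2))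
      ≤ ∫ x in Ioi a, Real.exp (-(s*x)^2) := by
    rw [← hSum.tsum_eq]
    exact Summable.tsum_le_tsum hterm hsummable hSum.summable
  rw [integral_Ioi_eval s a hs ha] at htsum_le
  -- final algebra
  have hE : s * a = Real.pi * Real.sqrt 2 * ((n:ℝ) - 1) / σ := by
    rw [hs_def, ha_def]; ring
  have hC : 0 < 2 / (Real.sqrt (2 * Real.pi) * σ) := by
    have : 0 < Real.sqrt (2 * Real.pi) := Real.sqrt_pos.2 (by positivity)
    positivity
  have hkey : (2 / (Real.sqrt (2 * Real.pi) * σ)) * (Real.sqrt Real.pi / (2*s))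
      = 1 / (2 * Real.pi) := by
    rw [hs_def, Real.sqrt_mul two_pos.le]
    have hπ : 0 < Real.sqrt Real.pi := Real.sqrt_pos.2 Real.pi_pos
    have hsqπ : Real.sqrt Real.pi * Real.sqrt Real.pi = Real.pi :=
      Real.mul_self_sqrt Real.pi_pos.le
    field_simp
    linear_combination (-1) * hsq2
  calc (2 / (Real.sqrt (2 * Real.pi) * σ)) *
        ∑' k : ℕ, Real.exp (-(2 * ((n:ℝ) + k) * Real.pi)^2 / (2 * σ^2))
      = (2 / (Real.sqrt (2 * Real.pi) * σ)) * ∑' k : ℕ, Real.exp (-(s * ((n:ℝ) + k))^2) := by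
        congr 1; exact tsum_congr hterm_eq
    _ ≤ (2 / (Real.sqrt (2 * Real.pi) * σ)) *
        ((Real.sqrt Real.pi / (2*s)) * (1 - erf (s*a))) := by
        apply mul_le_mul_of_nonneg_left htsum_le hC.le
    _ = (1 - erf (Real.pi * Real.sqrt 2 * ((n:ℝ) - 1) / σ)) / (2 * Real.pi) := by
        rw [← mul_assoc, hkey, hE]; ring
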